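/- For every integer m ≥ 8, the graph G_m is 2m-consecutive-colored: every edge of color i < 2m is adjacent to exactly one edge of color i+1, and every edge of color i > 1 is adjacent to exactly one edge of color i−1. -/

import Mathlib

/-- A vertex of the disjoint union of the `4m+2` copies of `L_{2m}`:
`(k, i)` is the vertex `v_i` of the copy `L^k`, with `1 ≤ k ≤ 4m+2` and
`0 ≤ i ≤ 2m`. -/
def VOk (m : ℕ) (p : ℕ × ℕ) : Prop :=
  1 ≤ p.1 ∧ p.1 ≤ 4 * m + 2 ∧ p.2 ≤ 2 * m

/-- Vertices of the disjoint union of the copies `L¹, …, L^{4m+2}` of `L_{2m}`. -/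
def Vm (m : ℕ) := { p : ℕ × ℕ // VOk m p }

/-- The identifications I1–I6 defining `G_m`. -/
def glueRel (m : ℕ) : Vm m → Vm m → Prop := fun x y =>
  (∃ t, 1 ≤ t ∧ t + 1 ≤ m ∧ x.1 = (t, t - 1) ∧ y.1 = (t + 1, t + 2)) ∨
  (∃ t, m + 1 ≤ t ∧ t + 1 ≤ 2 * m ∧ x.1 = (t, t - 2) ∧ y.1 = (t + 1, t + 1)) ∨
  (x.1 = (1, 2) ∧ y.1 = (2 * m, 2 * m - 2)) ∨
  (∃ t, 1 ≤ t ∧ t ≤ m ∧ x.1 = (t, t) ∧ y.1 = (2 * m + t, 2 * m - 5)) ∨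
  (∃ t, m + 1 ≤ t ∧ t ≤ 2 * m ∧ x.1 = (t, t - 1) ∧ y.1 = (2 * m + t, 5)) ∨
  (x.1 = (1, 0) ∧ y.1 = (4 * m + 1, 6)) ∨
  (x.1 = (4 * m + 2, 2 * m - 6) ∧ y.1 = (2 * m, 2 * m))

/-- The vertex set of `G_m`: the quotient of the disjoint union of the copies
of `L_{2m}` by the identifications I1–I6. -/
def Qm (m : ℕ) := Quot (glueRel m)

/-- Projection to the quotient. -/
def mkQ (m : ℕ) : Vm m → Qm m := Quot.mk (glueRel m)

/-- `x` and `y` are the endpoints of an edge of one of the copies of `L_{2m}`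
(`y` is the upper endpoint). -/
def EdgeV (m : ℕ) (x y : Vm m) : Prop :=
  x.1.1 = y.1.1 ∧ x.1.2 + 1 = y.1.2

/-- The graph `G_m`. -/
def Gm (m : ℕ) : SimpleGraph (Qm m) where
  Adj q q' := q ≠ q' ∧
    ∃ x y : Vm m, (EdgeV m x y ∨ EdgeV m y x) ∧ q = mkQ m x ∧ q' = mkQ m y
  symm := by
    constructor
    rintro q q' ⟨h, x, y, he, hx, hy⟩
    exact ⟨h.symm, y, x, by tauto, hy, hx⟩
  loopless := by constructor; rintro q ⟨h, -⟩; exact h rfl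


/-- `x` is incident to an edge of color `c` in its copy of `L_{2m}`:
the edge of color `c` of a copy joins the vertices `v_{c-1}` and `v_c`. -/
def Inc (m : ℕ) (x : Vm m) (c : ℕ) : Prop :=
  (c = x.1.2 ∧ 1 ≤ c) ∨ (c = x.1.2 + 1 ∧ c ≤ 2 * m)

/-- `(k, c)` is an edge of `G_m`: the edge of color `c` of the copy `L^k`. -/
def EdgeOk (m k c : ℕ) : Prop :=
  1 ≤ k ∧ k ≤ 4 * m + 2 ∧ 1 ≤ c ∧ c ≤ 2 * m

/-- The edges `(k, c)` and `(k', c')` of `G_m` are adjacent: they share a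
vertex of the quotient `G_m`. -/
def EAdj (m k c k' c' : ℕ) : Prop :=
  ∃ x y : Vm m, x.1.1 = k ∧ Inc m x c ∧ y.1.1 = k' ∧ Inc m y c' ∧
    mkQ m x = mkQ m y


def Gn (m a1 a2 b1 b2 : ℕ) : Prop :=
  (1 ≤ a1 ∧ a1 + 1 ≤ m ∧ a2 + 1 = a1 ∧ b1 = a1 + 1 ∧ b2 = a1 + 2) ∨
  (m + 1 ≤ a1 ∧ a1 + 1 ≤ 2 * m ∧ a2 + 2 = a1 ∧ b1 = a1 + 1 ∧ b2 = a1 + 1) ∨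
  (a1 = 1 ∧ a2 = 2 ∧ b1 = 2 * m ∧ b2 + 2 = 2 * m) ∨
  (1 ≤ a1 ∧ a1 ≤ m ∧ a2 = a1 ∧ b1 = 2 * m + a1 ∧ b2 + 5 = 2 * m) ∨
  (m + 1 ≤ a1 ∧ a1 ≤ 2 * m ∧ a2 + 1 = a1 ∧ b1 = 2 * m + a1 ∧ b2 = 5) ∨
  (a1 = 1 ∧ a2 = 0 ∧ b1 = 4 * m + 1 ∧ b2 = 6) ∨
  (a1 = 4 * m + 2 ∧ a2 + 6 = 2 * m ∧ b1 = 2 * m ∧ b2 = 2 * m)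

def C1n (m a1 a2 : ℕ) : Prop :=
  (a1 = 1 ∧ a2 = 0) ∨ (a1 = 2 ∧ a2 = 3) ∨ (a1 = 4 * m + 1 ∧ a2 = 6)

def C2n (m a1 a2 : ℕ) : Prop :=
  (a1 + 1 = 2 * m ∧ a2 + 3 = 2 * m) ∨ (a1 = 2 * m ∧ a2 = 2 * m) ∨
  (a1 = 4 * m + 2 ∧ a2 + 6 = 2 * m)

def Sn (m a1 a2 b1 b2 : ℕ) : Prop :=
  (a1 = b1 ∧ a2 = b2) ∨ Gn m a1 a2 b1 b2 ∨ Gn m b1 b2 a1 a2 ∨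
  (C1n m a1 a2 ∧ C1n m b1 b2) ∨ (C2n m a1 a2 ∧ C2n m b1 b2)

lemma aux_h1 {m b1 b2 x1 x2 z1 z2 : ℕ} (hm : 8 ≤ m)
    (h1 : Gn m b1 b2 x1 x2) (h2 : Gn m b1 b2 z1 z2) :
    (x1 = z1 ∧ x2 = z2) ∨ (C1n m x1 x2 ∧ C1n m z1 z2) ∨ (C2n m x1 x2 ∧ C2n m z1 z2) := by
  unfold Gn C1n C2n at *
  rcases h1 with h1|h1|h1|h1|h1|h1|h1 <;> rcases h2 with h2|h2|h2|h2|h2|h2|h2 <;>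
    first
    | (left; constructor <;> omega)
    | (right; left; constructor <;> omega)
    | (right; right; constructor <;> omega)
    | omega

lemma aux_h2 {m b1 b2 x1 x2 z1 z2 : ℕ} (hm : 8 ≤ m)
    (h1 : Gn m x1 x2 b1 b2) (h2 : Gn m z1 z2 b1 b2) :
    (x1 = z1 ∧ x2 = z2) ∨ (C1n m x1 x2 ∧ C1n m z1 z2) ∨ (C2n m x1 x2 ∧ C2n m z1 z2) := by
  unfold Gn C1n C2n at *
  rcases h1 with h1|h1|h1|h1|h1|h1|h1 <;> rcases h2 with h2|h2|h2|h2|h2|h2|h2 <;>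
    first
    | (left; constructor <;> omega)
    | (right; left; constructor <;> omega)
    | (right; right; constructor <;> omega)
    | omega

lemma aux_h3 {m b1 b2 x1 x2 z1 z2 : ℕ} (hm : 8 ≤ m)
    (h1 : Gn m b1 b2 x1 x2) (h2 : Gn m z1 z2 b1 b2) :
    (C1n m x1 x2 ∧ C1n m z1 z2) ∨ (C2n m x1 x2 ∧ C2n m z1 z2) := by
  unfold Gn C1n C2n at *
  rcases h1 with h1|h1|h1|h1|h1|h1|h1 <;> rcases h2 with h2|h2|h2|h2|h2|h2|h2 <;>
    first
    | (left; constructor <;> omega)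
    | (right; left; constructor <;> omega)
    | (right; right; constructor <;> omega)
    | omega

lemma aux_h5 {m b1 b2 x1 x2 : ℕ} (hm : 8 ≤ m) (hc : C1n m b1 b2)
    (h : Gn m b1 b2 x1 x2 ∨ Gn m x1 x2 b1 b2) : C1n m x1 x2 := by
  unfold Gn C1n at *; omega

lemma aux_h6 {m b1 b2 x1 x2 : ℕ} (hm : 8 ≤ m) (hc : C2n m b1 b2)
    (h : Gn m b1 b2 x1 x2 ∨ Gn m x1 x2 b1 b2) : C2n m x1 x2 := by
  unfold Gn C2n at *; omega

lemma aux_h7 {m b1 b2 : ℕ} (hm : 8 ≤ m) (hc : C1n m b1 b2) (hc2 : C2n m b1 b2) : False := by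
  unfold C1n C2n at *; omega

lemma Sn_refl {m a1 a2 : ℕ} : Sn m a1 a2 a1 a2 := Or.inl ⟨rfl, rfl⟩

lemma Sn_symm {m a1 a2 b1 b2 : ℕ} (h : Sn m a1 a2 b1 b2) : Sn m b1 b2 a1 a2 := by
  unfold Sn at *; tauto

lemma Sn_trans {m a1 a2 b1 b2 c1 c2 : ℕ} (hm : 8 ≤ m)
    (h1 : Sn m a1 a2 b1 b2) (h2 : Sn m b1 b2 c1 c2) : Sn m a1 a2 c1 c2 := by
  rcases h1 with ⟨e1, e2⟩ | g1 | g1 | ⟨p1, p2⟩ | ⟨p1, p2⟩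
  · subst e1; subst e2; exact h2
  · rcases h2 with ⟨e1, e2⟩ | g2 | g2 | ⟨q1, q2⟩ | ⟨q1, q2⟩
    · exact Or.inr (Or.inl (e1 ▸ e2 ▸ g1))
    · -- a→b, b→c : chain
      rcases aux_h3 hm g2 g1 with ⟨r1, r2⟩ | ⟨r1, r2⟩
      · exact Or.inr (Or.inr (Or.inr (Or.inl ⟨r2, r1⟩)))
      · exact Or.inr (Or.inr (Or.inr (Or.inr ⟨r2, r1⟩)))
    · -- a→b, c→b
      rcases aux_h2 hm g1 g2 with ⟨r1, r2⟩ | ⟨r1, r2⟩ | ⟨r1, r2⟩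
      · exact Or.inl ⟨r1, r2⟩
      · exact Or.inr (Or.inr (Or.inr (Or.inl ⟨r1, r2⟩)))
      · exact Or.inr (Or.inr (Or.inr (Or.inr ⟨r1, r2⟩)))
    · -- a→b, b ∈ C1, c ∈ C1
      have : C1n m a1 a2 := aux_h5 hm q1 (Or.inr g1)
      exact Or.inr (Or.inr (Or.inr (Or.inl ⟨this, q2⟩)))
    · have : C2n m a1 a2 := aux_h6 hm q1 (Or.inr g1)
      exact Or.inr (Or.inr (Or.inr (Or.inr ⟨this, q2⟩)))
  · rcases h2 with ⟨e1, e2⟩ | g2 | g2 | ⟨q1, q2⟩ | ⟨q1, q2⟩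
    · exact Or.inr (Or.inr (Or.inl (e1 ▸ e2 ▸ g1)))
    · -- b→a, b→c
      rcases aux_h1 hm g1 g2 with ⟨r1, r2⟩ | ⟨r1, r2⟩ | ⟨r1, r2⟩
      · exact Or.inl ⟨r1, r2⟩
      · exact Or.inr (Or.inr (Or.inr (Or.inl ⟨r1, r2⟩)))
      · exact Or.inr (Or.inr (Or.inr (Or.inr ⟨r1, r2⟩)))
    · -- b→a, c→b : chain c→b→a
      rcases aux_h3 hm g1 g2 with ⟨r1, r2⟩ | ⟨r1, r2⟩
      · exact Or.inr (Or.inr (Or.inr (Or.inl ⟨r1, r2⟩)))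
      · exact Or.inr (Or.inr (Or.inr (Or.inr ⟨r1, r2⟩)))
    · have : C1n m a1 a2 := aux_h5 hm q1 (Or.inl g1)
      exact Or.inr (Or.inr (Or.inr (Or.inl ⟨this, q2⟩)))
    · have : C2n m a1 a2 := aux_h6 hm q1 (Or.inl g1)
      exact Or.inr (Or.inr (Or.inr (Or.inr ⟨this, q2⟩)))
  · rcases h2 with ⟨e1, e2⟩ | g2 | g2 | ⟨q1, q2⟩ | ⟨q1, q2⟩
    · exact e1 ▸ e2 ▸ Or.inr (Or.inr (Or.inr (Or.inl ⟨p1, p2⟩)))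
    · have : C1n m c1 c2 := aux_h5 hm p2 (Or.inl g2)
      exact Or.inr (Or.inr (Or.inr (Or.inl ⟨p1, this⟩)))
    · have : C1n m c1 c2 := aux_h5 hm p2 (Or.inr g2)
      exact Or.inr (Or.inr (Or.inr (Or.inl ⟨p1, this⟩)))
    · exact Or.inr (Or.inr (Or.inr (Or.inl ⟨p1, q2⟩)))
    · exact absurd q1 (fun h => aux_h7 hm p2 h)
  · rcases h2 with ⟨e1, e2⟩ | g2 | g2 | ⟨q1, q2⟩ | ⟨q1, q2⟩
    · exact e1 ▸ e2 ▸ Or.inr (Or.inr (Or.inr (Or.inr ⟨p1, p2⟩)))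
    · have : C2n m c1 c2 := aux_h6 hm p2 (Or.inl g2)
      exact Or.inr (Or.inr (Or.inr (Or.inr ⟨p1, this⟩)))
    · have : C2n m c1 c2 := aux_h6 hm p2 (Or.inr g2)
      exact Or.inr (Or.inr (Or.inr (Or.inr ⟨p1, this⟩)))
    · exact absurd q1 (fun h => aux_h7 hm h p2)
    · exact Or.inr (Or.inr (Or.inr (Or.inr ⟨p1, q2⟩)))

lemma Sn_gap {m a1 a2 b1 b2 : ℕ} (hm : 8 ≤ m) (h : Sn m a1 a2 b1 b2) :
    (a1 = b1 ∧ a2 = b2) ∨ a2 + 3 ≤ b2 ∨ b2 + 3 ≤ a2 := by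
  unfold Sn Gn C1n C2n at *; omega

set_option maxHeartbeats 1600000 in
lemma glue_num {m : ℕ} (hm : 8 ≤ m) {x y : Vm m} (h : glueRel m x y) :
    Gn m x.1.1 x.1.2 y.1.1 y.1.2 := by
  obtain ⟨⟨x1, x2⟩, hx⟩ := x
  obtain ⟨⟨y1, y2⟩, hy⟩ := y
  change Gn m x1 x2 y1 y2
  unfold Gn
  rcases h with ⟨t,h1,h2,h3,h4⟩|⟨t,h1,h2,h3,h4⟩|⟨h3,h4⟩|⟨t,h1,h2,h3,h4⟩|⟨t,h1,h2,h3,h4⟩|⟨h3,h4⟩|⟨h3,h4⟩ <;>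
    (injection h3 with e1 e2) <;> (injection h4 with e3 e4)
  · exact Or.inl (by omega)
  · exact Or.inr (Or.inl (by omega))
  · exact Or.inr (Or.inr (Or.inl (by omega)))
  · exact Or.inr (Or.inr (Or.inr (Or.inl (by omega))))
  · exact Or.inr (Or.inr (Or.inr (Or.inr (Or.inl (by omega)))))
  · exact Or.inr (Or.inr (Or.inr (Or.inr (Or.inr (Or.inl (by omega))))))
  · exact Or.inr (Or.inr (Or.inr (Or.inr (Or.inr (Or.inr (by omega))))))

lemma quot_S {m : ℕ} (hm : 8 ≤ m) {x y : Vm m} (h : mkQ m x = mkQ m y) :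
    Sn m x.1.1 x.1.2 y.1.1 y.1.2 := by
  have h' : Relation.EqvGen (glueRel m) x y := Quot.eq.mp h
  clear h
  induction h' with
  | rel a b hab => exact Or.inr (Or.inl (glue_num hm hab))
  | refl a => exact Sn_refl
  | symm a b h ih => exact Sn_symm ih
  | trans a b c h1 h2 ih1 ih2 => exact Sn_trans hm ih1 ih2

/-- for `m ≥ 8` the graph `G_m` is `2m`-consecutive-colored:
every edge of color `c < 2m` is adjacent to exactly one edge of color `c+1`,
and every edge of color `c > 1` is adjacent to exactly one edge of color
`c−1`. -/
theorem statement11 (m : ℕ) (hm : 8 ≤ m) (k c : ℕ) (hE : EdgeOk m k c) :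
    (c < 2 * m →
      ∃! p : ℕ × ℕ, EdgeOk m p.1 p.2 ∧ p.2 = c + 1 ∧ EAdj m k c p.1 p.2) ∧
    (1 < c →
      ∃! p : ℕ × ℕ, EdgeOk m p.1 p.2 ∧ p.2 + 1 = c ∧ EAdj m k c p.1 p.2) := by
  obtain ⟨hk1, hk2, hc1, hc2⟩ := hE
  constructor
  · intro hc
    refine ⟨(k, c + 1), ⟨⟨hk1, hk2, by omega, by omega⟩, rfl, ?_⟩, ?_⟩
    · exact ⟨⟨(k, c), ⟨hk1, hk2, by omega⟩⟩, ⟨(k, c), ⟨hk1, hk2, by omega⟩⟩, rfl,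
        Or.inl ⟨rfl, hc1⟩, rfl, Or.inr ⟨rfl, by omega⟩, rfl⟩
    · rintro ⟨k', c'⟩ ⟨⟨hk'1, hk'2, hc'1, hc'2⟩, hc', x, y, hx1, hxc, hy1, hyc, hq⟩
      replace hc' : c' = c + 1 := hc'
      have hs := Sn_gap hm (quot_S hm hq)
      unfold Inc at hxc hyc
      simp only [Prod.mk.injEq]
      omega
  · intro hc
    refine ⟨(k, c - 1), ⟨⟨hk1, hk2, by omega, by omega⟩, by omega, ?_⟩, ?_⟩
    · exact ⟨⟨(k, c - 1), ⟨hk1, hk2, by omega⟩⟩, ⟨(k, c - 1), ⟨hk1, hk2, by omega⟩⟩, rfl,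
        Or.inr ⟨by show c = c - 1 + 1; omega, hc2⟩, rfl, Or.inl ⟨rfl, by omega⟩, rfl⟩
    · rintro ⟨k', c'⟩ ⟨⟨hk'1, hk'2, hc'1, hc'2⟩, hc', x, y, hx1, hxc, hy1, hyc, hq⟩
      replace hc' : c' + 1 = c := hc'
      have hs := Sn_gap hm (quot_S hm hq)
      unfold Inc at hxc hyc
      simp only [Prod.mk.injEq]
      omega
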